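/- For every integer n > 1, the Schemmel totient function satisfies L_m(n) = 0 if the smallest prime divisor of n is at most m, and L_m(n) = n * ∏_{p | n} (1 - m/p) otherwise. -/

import Mathlib

/-- The Schemmel totient function, defined by counting:
`L m n` is the number of `k` with `1 ≤ k ≤ n` such that `gcd(k+s, n) = 1`
for all `s ∈ {0, …, m-1}`. -/
def Lcount (m n : ℕ) : ℕ :=
  ((Finset.Icc 1 n).filter (fun k => ∀ s < m, Nat.gcd (k + s) n = 1)).card

lemma count_residue (r t v : ℕ) (hv1 : 1 ≤ v) (hvr : v ≤ r) :
    ((Finset.Ioc 0 (r * t)).filter (fun k => k % r = v % r)).card = t := by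
  have hr : 0 < r := lt_of_lt_of_le hv1 hvr
  have main : ((Finset.Ioc 0 (r * t)).filter (fun k => k % r = v % r)).card
      = (Finset.range t).card := by
    apply Finset.card_nbij' (i := fun k => (k - v) / r) (j := fun i => i * r + v)
    · -- forward maps into range t
      intro k hk
      simp only [Finset.mem_coe, Finset.mem_filter, Finset.mem_Ioc] at hk
      obtain ⟨⟨hk0, hkle⟩, hmod⟩ := hk
      have hkv : v ≤ k := by
        by_contra h
        push_neg at h
        have hk_lt_r : k < r := lt_of_lt_of_le h hvr
        rw [Nat.mod_eq_of_lt hk_lt_r] at hmod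
        rcases lt_or_eq_of_le hvr with hv | hv
        · rw [Nat.mod_eq_of_lt hv] at hmod; omega
        · subst hv; rw [Nat.mod_self] at hmod; omega
      simp only [Finset.mem_coe, Finset.mem_range]
      rw [Nat.div_lt_iff_lt_mul hr]
      have : k - v < k := by omega
      calc k - v < k := this
        _ ≤ r * t := hkle
        _ = t * r := Nat.mul_comm _ _
    · -- backward maps in
      intro i hi
      simp only [Finset.mem_coe, Finset.mem_range] at hi
      simp only [Finset.mem_coe, Finset.mem_filter, Finset.mem_Ioc]
      refine ⟨⟨by omega, ?_⟩, ?_⟩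
      · calc i * r + v ≤ (t - 1) * r + r := by
              have : i ≤ t - 1 := by omega
              exact Nat.add_le_add (Nat.mul_le_mul_right r this) hvr
          _ = ((t-1)+1) * r := by rw [Nat.add_mul, Nat.one_mul]
          _ = t * r := by congr 1; omega
          _ = r * t := Nat.mul_comm _ _
      · rw [Nat.add_comm, Nat.add_mul_mod_self_right]
    · -- left inverse
      intro k hk
      simp only [Finset.mem_coe, Finset.mem_filter, Finset.mem_Ioc] at hk
      obtain ⟨⟨hk0, hkle⟩, hmod⟩ := hk
      have hkv : v ≤ k := by
        by_contra h
        push_neg at h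
        have hk_lt_r : k < r := lt_of_lt_of_le h hvr
        rw [Nat.mod_eq_of_lt hk_lt_r] at hmod
        rcases lt_or_eq_of_le hvr with hv | hv
        · rw [Nat.mod_eq_of_lt hv] at hmod; omega
        · subst hv; rw [Nat.mod_self] at hmod; omega
      have hdvd : r ∣ k - v := (Nat.modEq_iff_dvd' hkv).mp (Nat.ModEq.symm hmod)
      show (k - v) / r * r + v = k
      rw [Nat.div_mul_cancel hdvd]
      omega
    · intro i hi
      show (i * r + v - v) / r = i
      rw [Nat.add_sub_cancel, Nat.mul_div_cancel _ hr]
  simpa using main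

lemma good_iff {p e m : ℕ} (hp : p.Prime) (he : 1 ≤ e) (hm : 1 ≤ m) (hmp : m < p) (k : ℕ) :
    (∀ s < m, Nat.gcd (k + s) (p ^ e) = 1) ↔ (1 ≤ k % p ∧ k % p ≤ p - m) := by
  have hp1 : 1 < p := hp.one_lt
  have step : ∀ s, (Nat.gcd (k + s) (p ^ e) = 1 ↔ ¬ p ∣ (k + s)) := by
    intro s
    rw [← Nat.coprime_iff_gcd_eq_one, Nat.coprime_pow_right_iff he,
      Nat.coprime_comm, hp.coprime_iff_not_dvd]
  constructor
  · intro h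
    constructor
    · by_contra h0
      push_neg at h0
      have : p ∣ k := Nat.dvd_of_mod_eq_zero (by omega)
      exact (step 0).mp (h 0 (by omega)) (by simpa using this)
    · by_contra h0
      push_neg at h0
      set s := p - k % p with hs
      have hkp : k % p < p := Nat.mod_lt _ (by omega)
      have hsm : s < m := by omega
      have hsp : s < p := by omega
      have hdvd : p ∣ k + s := by
        have h1 : (k + s) % p = (k % p + s) % p := by
          rw [Nat.add_mod, Nat.mod_eq_of_lt hsp]
        have h2 : k % p + s = p := by omega
        exact Nat.dvd_of_mod_eq_zero (by rw [h1, h2, Nat.mod_self])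
      exact (step s).mp (h s hsm) hdvd
  · rintro ⟨h1, h2⟩ s hs
    rw [step]
    intro hdvd
    have hsp : s < p := by omega
    have hmod : (k + s) % p = (k % p + s) % p := by
      rw [Nat.add_mod, Nat.mod_eq_of_lt hsp]
    have h0 : (k + s) % p = 0 := Nat.dvd_iff_mod_eq_zero.mp hdvd
    have hlt : k % p + s < p := by omega
    rw [hmod, Nat.mod_eq_of_lt hlt] at h0
    omega

lemma lcount_pp {p e m : ℕ} (hp : p.Prime) (he : 1 ≤ e) (hm : 1 ≤ m) (hmp : m < p) :
    Lcount m (p ^ e) = p ^ (e - 1) * (p - m) := by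
  have hp1 : 1 < p := hp.one_lt
  unfold Lcount
  have hIcc : Finset.Icc 1 (p ^ e) = Finset.Ioc 0 (p ^ e) := rfl
  rw [hIcc]
  have hfe : (Finset.Ioc 0 (p ^ e)).filter (fun k => ∀ s < m, Nat.gcd (k + s) (p ^ e) = 1)
      = (Finset.Ioc 0 (p ^ e)).filter (fun k => k % p ∈ Finset.Icc 1 (p - m)) := by
    apply Finset.filter_congr
    intro k _
    rw [good_iff hp he hm hmp k]
    simp [Finset.mem_Icc]
  rw [hfe]
  rw [Finset.card_eq_sum_card_fiberwise (f := fun k => k % p) (t := Finset.Icc 1 (p - m))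
    (s := (Finset.Ioc 0 (p ^ e)).filter (fun k => k % p ∈ Finset.Icc 1 (p - m)))
    (fun x hx => (Finset.mem_filter.mp hx).2)]
  have hterm : ∀ v ∈ Finset.Icc 1 (p - m),
      (((Finset.Ioc 0 (p ^ e)).filter (fun k => k % p ∈ Finset.Icc 1 (p - m))).filter
        (fun k => k % p = v)).card = p ^ (e - 1) := by
    intro v hv
    rw [Finset.mem_Icc] at hv
    have hvp : v ≤ p := le_trans hv.2 (by omega)
    have hset : ((Finset.Ioc 0 (p ^ e)).filter (fun k => k % p ∈ Finset.Icc 1 (p - m))).filter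
        (fun k => k % p = v) = (Finset.Ioc 0 (p ^ e)).filter (fun k => k % p = v % p) := by
      rw [Finset.filter_filter]
      apply Finset.filter_congr
      intro k _
      simp only [Finset.mem_Icc]
      constructor
      · rintro ⟨_, h⟩; rw [h, Nat.mod_eq_of_lt (by omega)]
      · intro h
        rw [Nat.mod_eq_of_lt (by omega : v < p)] at h
        exact ⟨by omega, h⟩
    rw [hset]
    have hpe : p ^ e = p * p ^ (e - 1) := by
      rw [← pow_succ']
      congr 1
      omega
    rw [hpe]
    exact count_residue p (p ^ (e - 1)) v hv.1 hvp
  rw [Finset.sum_congr rfl hterm, Finset.sum_const, Nat.card_Icc]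
  simp [Nat.mul_comm]

lemma lcount_zero {m n : ℕ} (hn : 1 < n) (h : n.minFac ≤ m) : Lcount m n = 0 := by
  unfold Lcount
  rw [Finset.card_eq_zero, Finset.filter_eq_empty_iff]
  intro k _
  push_neg
  set p := n.minFac with hpdef
  have hp : p.Prime := Nat.minFac_prime (by omega)
  have hpd : p ∣ n := Nat.minFac_dvd n
  have hp1 : 1 < p := hp.one_lt
  refine ⟨(p - k % p) % p, lt_of_lt_of_le (Nat.mod_lt _ (by omega)) h, ?_⟩
  have hkp : k % p < p := Nat.mod_lt _ (by omega)
  have hdvd : p ∣ k + (p - k % p) % p := by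
    rcases Nat.eq_zero_or_pos (k % p) with h0 | h0
    · have : (p - k % p) % p = 0 := by rw [h0, Nat.sub_zero, Nat.mod_self]
      rw [this, Nat.add_zero]
      exact Nat.dvd_of_mod_eq_zero h0
    · have hs : (p - k % p) % p = p - k % p := Nat.mod_eq_of_lt (by omega)
      rw [hs]
      apply Nat.dvd_of_mod_eq_zero
      have : (k + (p - k % p)) % p = (k % p + (p - k % p)) % p := by
        rw [Nat.add_mod, Nat.mod_eq_of_lt (by omega : p - k % p < p)]
      rw [this, (by omega : k % p + (p - k % p) = p), Nat.mod_self]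
  intro hgcd
  have h1 : p ∣ 1 := hgcd ▸ Nat.dvd_gcd hdvd hpd
  have := Nat.le_of_dvd one_pos h1
  omega

lemma isUnit_prod_iff {M N : Type*} [Monoid M] [Monoid N] {a : M} {b : N} :
    IsUnit (a, b) ↔ IsUnit a ∧ IsUnit b := by
  constructor
  · intro h
    exact ⟨h.map (MonoidHom.fst M N), h.map (MonoidHom.snd M N)⟩
  · rintro ⟨⟨u, hu⟩, ⟨v, hv⟩⟩
    exact ⟨⟨(↑u, ↑v), (↑u⁻¹, ↑v⁻¹), by simp [Prod.ext_iff], by simp [Prod.ext_iff]⟩,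
      by simp [hu, hv]⟩

open Classical in
noncomputable def SG (m n : ℕ) [NeZero n] : Finset (ZMod n) :=
  Finset.univ.filter fun x => ∀ s < m, IsUnit (x + (s : ZMod n))

lemma lcount_eq_card_SG (m n : ℕ) [NeZero n] : Lcount m n = (SG m n).card := by
  classical
  unfold Lcount SG
  refine Finset.card_nbij (fun k => (k : ZMod n)) ?_ ?_ ?_
  · intro k hk
    simp only [Finset.mem_coe, Finset.mem_filter, Finset.mem_Icc] at hk ⊢
    refine ⟨Finset.mem_univ _, fun s hs => ?_⟩
    have : ((k : ZMod n) + (s : ZMod n)) = ((k + s : ℕ) : ZMod n) := by push_cast; ring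
    rw [this, ZMod.isUnit_iff_coprime]
    exact hk.2 s hs
  · intro k₁ h₁ k₂ h₂ heq
    simp only [Finset.coe_filter, Set.mem_setOf_eq, Finset.mem_Icc] at h₁ h₂
    have hmod := (ZMod.natCast_eq_natCast_iff' k₁ k₂ n).mp heq
    have hn : 0 < n := Nat.pos_of_ne_zero (NeZero.ne n)
    rcases eq_or_lt_of_le h₁.1.2 with h | h
    · rcases eq_or_lt_of_le h₂.1.2 with h' | h'
      · omega
      · rw [h, Nat.mod_self, Nat.mod_eq_of_lt h'] at hmod; omega
    · rcases eq_or_lt_of_le h₂.1.2 with h' | h'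
      · rw [h', Nat.mod_self, Nat.mod_eq_of_lt h] at hmod; omega
      · rw [Nat.mod_eq_of_lt h, Nat.mod_eq_of_lt h'] at hmod; exact hmod
  · intro x hx
    simp only [Finset.coe_filter, Set.mem_setOf_eq, Finset.mem_coe, Finset.mem_filter,
      Finset.mem_univ, true_and] at hx
    have hn : 0 < n := Nat.pos_of_ne_zero (NeZero.ne n)
    set k : ℕ := if x.val = 0 then n else x.val with hk
    have hcast : (k : ZMod n) = x := by
      rcases eq_or_ne x.val 0 with h0 | h0
      · have : x = 0 := by
          have := ZMod.natCast_rightInverse (n := n) x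
          rw [h0] at this; simpa using this.symm
        simp [hk, h0, this, ZMod.natCast_self]
      · simp only [hk, if_neg h0]
        exact ZMod.natCast_rightInverse x
    refine ⟨k, ?_, hcast⟩
    simp only [Set.mem_setOf_eq, Finset.mem_coe, Finset.mem_filter, Finset.mem_Icc]
    have hkmem : 1 ≤ k ∧ k ≤ n := by
      rcases eq_or_ne x.val 0 with h0 | h0
      · simp [hk, h0]; omega
      · simp only [hk, if_neg h0]
        exact ⟨Nat.one_le_iff_ne_zero.mpr h0, le_of_lt (ZMod.val_lt x)⟩
    refine ⟨hkmem, fun s hs => ?_⟩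
    rw [show (k + s).gcd n = 1 ↔ Nat.Coprime (k+s) n from Iff.rfl, ← ZMod.isUnit_iff_coprime]
    have : ((k + s : ℕ) : ZMod n) = x + (s : ZMod n) := by push_cast [hcast]; ring
    rw [this]
    exact hx s hs

lemma SG_mul (m a b : ℕ) [NeZero a] [NeZero b] (h : a.Coprime b) :
    haveI : NeZero (a * b) := ⟨Nat.mul_ne_zero (NeZero.ne a) (NeZero.ne b)⟩
    (SG m (a * b)).card = (SG m a).card * (SG m b).card := by
  classical
  haveI : NeZero (a * b) := ⟨Nat.mul_ne_zero (NeZero.ne a) (NeZero.ne b)⟩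
  rw [← Finset.card_product]
  set e := ZMod.chineseRemainder h
  have key : ∀ (x : ZMod (a * b)) (s : ℕ),
      IsUnit (x + (s : ZMod (a * b))) ↔
        (IsUnit ((e x).1 + (s : ZMod a)) ∧ IsUnit ((e x).2 + (s : ZMod b))) := by
    intro x s
    have h1 : e (x + (s : ZMod (a * b))) = ((e x).1 + (s : ZMod a), (e x).2 + (s : ZMod b)) := by
      rw [map_add, map_natCast]
      rfl
    constructor
    · intro hu
      have := hu.map e.toRingHom
      rw [show e.toRingHom (x + (s : ZMod (a*b))) = e (x + (s : ZMod (a*b))) from rfl, h1] at this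
      exact isUnit_prod_iff.mp this
    · intro ⟨hu1, hu2⟩
      have : IsUnit (e (x + (s : ZMod (a * b)))) := by
        rw [h1]; exact isUnit_prod_iff.mpr ⟨hu1, hu2⟩
      have := this.map e.symm.toRingHom
      simpa using this
  refine Finset.card_nbij (fun x => e x) ?_ ?_ ?_
  · intro x hx
    simp only [SG, Finset.mem_coe, Finset.mem_filter, Finset.mem_univ, true_and, Finset.mem_product] at hx ⊢
    exact ⟨fun s hs => ((key x s).mp (hx s hs)).1, fun s hs => ((key x s).mp (hx s hs)).2⟩
  · exact fun x _ y _ hxy => e.injective hxy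
  · intro y hy
    simp only [SG, Finset.coe_filter, Finset.mem_coe, Finset.mem_product, Finset.mem_filter,
      Finset.mem_univ, true_and, Set.mem_setOf_eq] at hy ⊢
    refine ⟨e.symm y, fun s hs => ?_, by simp⟩
    rw [key (e.symm y) s]
    simp only [RingEquiv.apply_symm_apply]
    exact ⟨hy.1 s hs, hy.2 s hs⟩

lemma lcount_one (m : ℕ) : Lcount m 1 = 1 := by
  simp [Lcount, Nat.gcd_one_right]

lemma lcount_mult (m : ℕ) {a b : ℕ} (ha : a ≠ 0) (hb : b ≠ 0) (h : a.Coprime b) :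
    Lcount m (a * b) = Lcount m a * Lcount m b := by
  haveI : NeZero a := ⟨ha⟩
  haveI : NeZero b := ⟨hb⟩
  haveI : NeZero (a * b) := ⟨Nat.mul_ne_zero ha hb⟩
  rw [lcount_eq_card_SG, lcount_eq_card_SG, lcount_eq_card_SG]
  exact SG_mul m a b h

def Lfun (m : ℕ) : ArithmeticFunction ℕ := ⟨Lcount m, by simp [Lcount]⟩

lemma Lfun_mult (m : ℕ) : (Lfun m).IsMultiplicative :=
  ArithmeticFunction.IsMultiplicative.iff_ne_zero.mpr
    ⟨lcount_one m, fun {a b} ha hb h => lcount_mult m ha hb h⟩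

lemma lcount_factorization (m n : ℕ) (hn : n ≠ 0) :
    Lcount m n = ∏ p ∈ n.primeFactors, Lcount m (p ^ n.factorization p) := by
  have := (Lfun_mult m).multiplicative_factorization (Lfun m) hn
  simpa [Lfun, Finsupp.prod, Nat.support_factorization] using this

theorem schemmel_formula (m n : ℕ) (hm : 1 ≤ m) (hn : 1 < n) :
    (n.minFac ≤ m → Lcount m n = 0) ∧
    (m < n.minFac →
      (Lcount m n : ℚ) = n * ∏ p ∈ n.primeFactors, (1 - (m : ℚ) / p)) := by
  constructor
  · exact fun h => lcount_zero hn h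
  · intro hlt
    have hn0 : n ≠ 0 := by omega
    have key : ∀ p ∈ n.primeFactors,
        (Lcount m (p ^ n.factorization p) : ℚ)
          = (p : ℚ) ^ n.factorization p * (1 - (m : ℚ) / p) := by
      intro p hp
      have hpp : p.Prime := Nat.prime_of_mem_primeFactors hp
      have hpd : p ∣ n := Nat.dvd_of_mem_primeFactors hp
      have he : 1 ≤ n.factorization p := (Nat.Prime.factorization_pos_of_dvd hpp hn0 hpd)
      have hmp : m < p := lt_of_lt_of_le hlt (Nat.minFac_le_of_dvd hpp.two_le hpd)
      rw [lcount_pp hpp he hm hmp]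
      have hp0 : (p : ℚ) ≠ 0 := Nat.cast_ne_zero.mpr hpp.pos.ne'
      push_cast [Nat.cast_sub (le_of_lt hmp)]
      have hpe : (p : ℚ) ^ n.factorization p = (p : ℚ) ^ (n.factorization p - 1) * p := by
        conv_lhs => rw [show n.factorization p = (n.factorization p - 1) + 1 by omega]
        rw [pow_succ]
      rw [hpe]
      field_simp
    rw [lcount_factorization m n hn0]
    push_cast
    rw [Finset.prod_congr rfl key, Finset.prod_mul_distrib]
    congr 1
    have := Nat.factorization_prod_pow_eq_self hn0
    conv_rhs => rw [← this]
    rw [Finsupp.prod, Nat.support_factorization]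
    push_cast
    rfl
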